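/- Let h : [0,∞) → ℝ be convex with h(0) = 0 = min h, and n ≥ 1. Then ∫_0^∞ e^{-h(z)} h(z) z^{n-1} dz ≤ (n+1) ∫_0^∞ e^{-h(z)} z^{n-1} dz, assuming both integrals are finite. -/

import Mathlib

open MeasureTheory Real Set

/-- Kalai–Vempala expectation bound (cone case): for `h` convex on `[0,∞)` with
`h(0) = 0 = min h`, `∫_0^∞ e^{-h} h z^{n-1} ≤ (n+1) ∫_0^∞ e^{-h} z^{n-1}`. -/
theorem stmt_18 (h : ℝ → ℝ) (hconv : ConvexOn ℝ (Set.Ici (0 : ℝ)) h)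
    (h0 : h 0 = 0) (hnn : ∀ z : ℝ, 0 ≤ z → 0 ≤ h z)
    (n : ℕ) (hn : 1 ≤ n)
    (hint : IntegrableOn (fun z => Real.exp (-h z) * z ^ (n - 1)) (Set.Ioi (0 : ℝ)))
    (hint' : IntegrableOn (fun z => Real.exp (-h z) * h z * z ^ (n - 1)) (Set.Ioi (0 : ℝ))) :
    ∫ z in Set.Ioi (0 : ℝ), Real.exp (-h z) * h z * z ^ (n - 1) ≤
      (n + 1) * ∫ z in Set.Ioi (0 : ℝ), Real.exp (-h z) * z ^ (n - 1) := by
  have hn1 : (1:ℝ) ≤ (n:ℝ) := by exact_mod_cast hn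
  have hnpos : (0:ℝ) < (n:ℝ) := by linarith
  set ε : ℝ := 1 / ((n:ℝ) * ((n:ℝ) + 1)) with hεdef
  have hεpos : 0 < ε := by positivity
  have hεle : ε ≤ 1/2 := by
    rw [hεdef]
    rw [div_le_div_iff₀ (by positivity) (by norm_num)]
    nlinarith
  set a : ℝ := 1 - ε with hadef
  have ha0 : 0 < a := by simp only [hadef]; linarith
  have ha1 : a < 1 := by simp only [hadef]; linarith
  -- Step 2: h (a*z) ≤ a * h z for z ≥ 0
  have step2 : ∀ z : ℝ, 0 ≤ z → h (a * z) ≤ a * h z := by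
    intro z hz
    have := hconv.2 (mem_Ici.mpr hz) (mem_Ici.mpr le_rfl) (le_of_lt ha0)
      (by linarith : (0:ℝ) ≤ 1 - a) (by ring)
    simpa [h0, smul_eq_mul] using this
  -- pointwise inequality on Ioi 0
  have ptwise : ∀ z ∈ Ioi (0:ℝ),
      Real.exp (-h z) * z ^ (n-1) + ε * (Real.exp (-h z) * h z * z ^ (n-1))
        ≤ Real.exp (-h (a * z)) * z ^ (n-1) := by
    intro z hz
    have hz0 : (0:ℝ) < z := hz
    have hhz : 0 ≤ h z := hnn z hz0.le
    have key : Real.exp (-h z) * (1 + ε * h z) ≤ Real.exp (-h (a*z)) := by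
      have h1 : Real.exp (-h z) * (1 + ε * h z) ≤ Real.exp (-(a * h z)) := by
        have : Real.exp (-(a * h z)) = Real.exp (-h z) * Real.exp (ε * h z) := by
          rw [← Real.exp_add]; rw [hadef]; ring_nf
        rw [this]
        have := Real.add_one_le_exp (ε * h z)
        have hne : 0 < Real.exp (-h z) := Real.exp_pos _
        nlinarith
      have h2 : Real.exp (-(a * h z)) ≤ Real.exp (-h (a*z)) :=
        Real.exp_le_exp.mpr (by have := step2 z hz0.le; linarith)
      linarith
    have hzp : (0:ℝ) ≤ z ^ (n-1) := by positivity
    nlinarith [mul_le_mul_of_nonneg_right key hzp]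
  -- measurability of h on Ioi 0
  have hcont : ContinuousOn h (Ioi 0) :=
    (hconv.subset Ioi_subset_Ici_self (convex_Ioi 0)).continuousOn isOpen_Ioi
  -- the RHS function is integrable
  have hrhs_int : IntegrableOn (fun z => Real.exp (-h (a * z)) * z ^ (n-1)) (Ioi 0) := by
    have : IntegrableOn (fun z => Real.exp (-h (a*z)) * (a*z) ^ (n-1)) (Ioi 0) := by
      have := (integrableOn_Ioi_comp_mul_left_iff
        (fun z => Real.exp (-h z) * z ^ (n-1)) 0 ha0).mpr (by simpa using hint)
      simpa using this
    have h2 := this.const_mul ((a:ℝ) ^ (n-1))⁻¹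
    refine IntegrableOn.congr_fun h2 (fun z hz => ?_) measurableSet_Ioi
    have hap : (0:ℝ) < a ^ (n-1) := by positivity
    field_simp [mul_pow]
    ring
  -- integral comparison
  have hint2 : IntegrableOn (fun z => Real.exp (-h z) * z ^ (n-1)
      + ε * (Real.exp (-h z) * h z * z ^ (n-1))) (Ioi 0) :=
    hint.add (hint'.const_mul ε)
  have intle : ∫ z in Ioi (0:ℝ), (Real.exp (-h z) * z ^ (n-1)
      + ε * (Real.exp (-h z) * h z * z ^ (n-1)))
      ≤ ∫ z in Ioi (0:ℝ), Real.exp (-h (a * z)) * z ^ (n-1) :=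
    setIntegral_mono_on hint2 hrhs_int measurableSet_Ioi ptwise
  -- compute RHS integral by substitution
  set Z : ℝ := ∫ z in Ioi (0:ℝ), Real.exp (-h z) * z ^ (n-1) with hZdef
  set I : ℝ := ∫ z in Ioi (0:ℝ), Real.exp (-h z) * h z * z ^ (n-1) with hIdef
  have hZnn : 0 ≤ Z := by
    apply setIntegral_nonneg measurableSet_Ioi
    intro z hz
    have : (0:ℝ) < z := hz
    positivity
  have hsubst : ∫ z in Ioi (0:ℝ), Real.exp (-h (a * z)) * z ^ (n-1)
      = (a ^ n)⁻¹ * Z := by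
    have hap : (0:ℝ) < a ^ (n-1) := by positivity
    have e1 : ∀ z ∈ Ioi (0:ℝ), Real.exp (-h (a * z)) * z ^ (n-1)
        = (a ^ (n-1))⁻¹ * (Real.exp (-h (a*z)) * (a*z) ^ (n-1)) := by
      intro z hz
      field_simp [mul_pow]
      ring
    rw [setIntegral_congr_fun measurableSet_Ioi e1, integral_const_mul,
      integral_comp_mul_left_Ioi (fun u => Real.exp (-h u) * u ^ (n-1)) 0 ha0]
    simp only [mul_zero, smul_eq_mul, ← hZdef]
    rw [← mul_assoc, ← mul_inv]
    congr 2
    have hne : n - 1 + 1 = n := by omega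
    rw [← pow_succ, hne]
  -- combine
  have intadd : ∫ z in Ioi (0:ℝ), (Real.exp (-h z) * z ^ (n-1)
      + ε * (Real.exp (-h z) * h z * z ^ (n-1))) = Z + ε * I := by
    rw [integral_add hint (hint'.const_mul ε), integral_const_mul]
  rw [intadd, hsubst] at intle
  -- arithmetic: (a^n)⁻¹ ≤ 1 + (n+1) * ε
  have hbern : 1 - (n:ℝ) * ε ≤ a ^ n := by
    have := one_add_mul_le_pow (a := -ε) (by linarith) n
    simpa [hadef, mul_comm, ← sub_eq_add_neg] using this
  have h1nε : 1 - (n:ℝ) * ε = (n:ℝ) / ((n:ℝ)+1) := by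
    rw [hεdef]; field_simp; ring
  have hanpos : (0:ℝ) < a ^ n := by positivity
  have hinv : (a ^ n)⁻¹ ≤ ((n:ℝ)+1) / (n:ℝ) := by
    rw [inv_le_iff_one_le_mul₀ hanpos]  -- may need different lemma
    calc (1:ℝ) = ((n:ℝ)+1)/(n:ℝ) * ((n:ℝ)/((n:ℝ)+1)) := by field_simp
    _ ≤ ((n:ℝ)+1)/(n:ℝ) * a ^ n := by
        apply mul_le_mul_of_nonneg_left _ (by positivity)
        rw [← h1nε]; exact hbern
  have harith : (a ^ n)⁻¹ ≤ 1 + ((n:ℝ)+1) * ε := by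
    have : ((n:ℝ)+1)/(n:ℝ) = 1 + ((n:ℝ)+1) * ε := by
      rw [hεdef]; field_simp
    linarith [hinv, this.symm.le]
  -- finish: Z + ε I ≤ (a^n)⁻¹ Z ≤ Z + (n+1) ε Z, so ε I ≤ (n+1) ε Z
  have final : ε * I ≤ (n+1) * ε * Z := by
    have h3 : (a ^ n)⁻¹ * Z ≤ (1 + ((n:ℝ)+1) * ε) * Z :=
      mul_le_mul_of_nonneg_right harith hZnn
    nlinarith
  have : I ≤ ((n:ℝ)+1) * Z := by
    have := (mul_le_mul_iff_right₀ hεpos).mp (by linarith [final] : ε * I ≤ ε * (((n:ℝ)+1) * Z))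
    linarith
  push_cast
  linarith
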